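/- arXiv:2401.17687 — 9 statements merged into one kernel-verified Lean document; each statement's English description precedes it below -/
import Mathlib

section
/- Let H(t) = ∑_{n≥0} h_n t^n be the complete homogeneous symmetric function generating series, and let [p_n] be defined by D_q E(t)/E(t) = ∑_{n≥1} [p_n] (-t)^{n-1} where E(t) = ∑ e_n t^n. Then ∑_{n≥1} [p_n] t^{n-1} = D_q H(t)/H(qt). -/
/-- The q-integer `[n]_q = 1 + q + ... + q^{n-1}`. -/
noncomputable def qInt {K : Type*} [CommRing K] (q : K) (n : ℕ) : K :=
  ∑ i ∈ Finset.range n, q ^ i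

/-- The q-derivative `D_q F(t) = (F(qt) - F(t))/((q-1)t)`. -/
noncomputable def qDeriv {K : Type*} [CommRing K] (q : K) (F : PowerSeries K) :
    PowerSeries K :=
  PowerSeries.mk fun n => qInt q (n + 1) * PowerSeries.coeff (n + 1) F

lemma qInt_add {K : Type*} [CommRing K] (q : K) (a b : ℕ) :
    qInt q (a + b) = qInt q a + q ^ a * qInt q b := by
  rw [qInt, qInt, qInt, Finset.sum_range_add, Finset.mul_sum]
  simp [pow_add]

/-- q-Leibniz rule. -/
lemma qDeriv_mul {K : Type*} [CommRing K] (q : K) (F G : PowerSeries K) :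
    qDeriv q (F * G) =
      PowerSeries.rescale q F * qDeriv q G + qDeriv q F * G := by
  ext n
  simp only [qDeriv, PowerSeries.coeff_mk, map_add, PowerSeries.coeff_mul,
    Finset.Nat.sum_antidiagonal_eq_sum_range_succ_mk, PowerSeries.coeff_rescale]
  have split : ∀ i ∈ Finset.range (n + 1 + 1),
      qInt q (n + 1) * (PowerSeries.coeff i F * PowerSeries.coeff (n + 1 - i) G)
        = qInt q i * PowerSeries.coeff i F * PowerSeries.coeff (n + 1 - i) G
          + q ^ i * PowerSeries.coeff i F *
            (qInt q (n + 1 - i) * PowerSeries.coeff (n + 1 - i) G) := by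
    intro i hi
    simp only [Finset.mem_range] at hi
    have h1 := qInt_add q i (n + 1 - i)
    rw [show i + (n + 1 - i) = n + 1 by omega] at h1
    rw [h1]; ring
  rw [Finset.mul_sum, Finset.sum_congr rfl split, Finset.sum_add_distrib]
  rw [Finset.sum_range_succ' (fun i => qInt q i * PowerSeries.coeff i F *
        PowerSeries.coeff (n + 1 - i) G),
      Finset.sum_range_succ (fun i => q ^ i * PowerSeries.coeff i F *
        (qInt q (n + 1 - i) * PowerSeries.coeff (n + 1 - i) G))]
  have hz : qInt q 0 = 0 := by simp [qInt]
  simp only [Nat.sub_self, hz, zero_mul, mul_zero, add_zero, Nat.succ_sub_succ]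
  rw [add_comm]
  have : ∀ x ∈ Finset.range (n + 1),
      q ^ x * PowerSeries.coeff x F * (qInt q (n + 1 - x) * PowerSeries.coeff (n + 1 - x) G)
        = q ^ x * PowerSeries.coeff x F *
            (qInt q (n - x + 1) * PowerSeries.coeff (n - x + 1) G) := by
    intro x hx
    simp only [Finset.mem_range] at hx
    rw [show n + 1 - x = n - x + 1 from by omega]
  rw [Finset.sum_congr rfl this]

lemma qDeriv_one {K : Type*} [CommRing K] (q : K) : qDeriv q (1 : PowerSeries K) = 0 := by
  ext n
  simp [qDeriv, PowerSeries.coeff_one]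

lemma qDeriv_rescale {K : Type*} [CommRing K] (q c : K) (F : PowerSeries K) :
    qDeriv q (PowerSeries.rescale c F) =
      PowerSeries.C c * PowerSeries.rescale c (qDeriv q F) := by
  ext n
  simp [qDeriv, PowerSeries.coeff_rescale, pow_succ]
  ring

/-- With `[pₙ]` defined via `E(t)` by `D_q E/E = ∑ [pₙ](-t)^{n-1}` and
`H(t) = E(-t)⁻¹`, one has `∑_{n≥1} [pₙ] t^{n-1} = D_q H(t)/H(qt)`. -/
theorem stmt3 {K : Type*} [CommRing K] (q : K) (e h p : ℕ → K) (he0 : e 0 = 1)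
    (hdefp : qDeriv q (PowerSeries.mk e) =
      PowerSeries.mk e * PowerSeries.mk (fun n => (-1 : K) ^ n * p (n + 1)))
    (hH : PowerSeries.rescale (-1 : K) (PowerSeries.mk e) * PowerSeries.mk h = 1) :
    qDeriv q (PowerSeries.mk h) =
      PowerSeries.rescale q (PowerSeries.mk h) * PowerSeries.mk (fun n => p (n + 1)) := by
  set E := PowerSeries.mk e with hE
  set H := PowerSeries.mk h with hHdef
  set P := PowerSeries.mk (fun n => p (n + 1)) with hP
  have hresP : PowerSeries.rescale (-1 : K)
      (PowerSeries.mk (fun n => (-1 : K) ^ n * p (n + 1))) = P := by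
    rw [PowerSeries.rescale_mk, hP]
    apply PowerSeries.ext
    intro n
    simp only [PowerSeries.coeff_mk, ← mul_assoc, ← mul_pow]
    simp
  have key := congrArg (qDeriv q) hH
  rw [qDeriv_mul, qDeriv_one, qDeriv_rescale, hdefp, map_mul, hresP] at key
  set A := PowerSeries.rescale q (PowerSeries.rescale (-1 : K) E) with hA
  have hc : (PowerSeries.C (-1) : PowerSeries K) = -1 := by simp
  rw [hc] at key
  have h1 : A * qDeriv q H = P := by
    linear_combination key + P * hH
  have h2 : A * (PowerSeries.rescale q H * P) = P := by
    rw [← mul_assoc, hA, ← map_mul, hH, map_one, one_mul]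
  have hu : IsUnit A := by
    rw [PowerSeries.isUnit_iff_constantCoeff]
    have : PowerSeries.constantCoeff A = 1 := by
      rw [← PowerSeries.coeff_zero_eq_constantCoeff_apply]
      simp [hA, PowerSeries.coeff_rescale, hE, he0]
    rw [this]
    exact isUnit_one
  exact hu.mul_left_cancel (h1.trans h2.symm)
end

section
/- With [p_n] the q-power sums defined by ∑_{n≥1} [p_n] t^{n-1} = D_q H(t)/H(qt), for all n ≥ 1 one has ∑_{k=1}^{n} h_{n-k} [p_k] q^{n-k} = [n]_q h_n. -/
/-- With `[pₙ]` defined by `∑_{n≥1}[pₙ]t^{n-1} = D_q H(t)/H(qt)`, for `n ≥ 1`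
`∑_{k=1}^n h_{n-k} [p_k] q^{n-k} = [n]_q hₙ`. -/
theorem stmt4 {K : Type*} [CommRing K] (q : K) (h p : ℕ → K) (hh0 : h 0 = 1)
    (hdefp : qDeriv q (PowerSeries.mk h) =
      PowerSeries.rescale q (PowerSeries.mk h) * PowerSeries.mk (fun n => p (n + 1))) :
    ∀ n : ℕ, 1 ≤ n →
      ∑ k ∈ Finset.Icc 1 n, h (n - k) * p k * q ^ (n - k) = qInt q n * h n := by
  intro n hn
  have := congrArg (PowerSeries.coeff (n - 1)) hdefp
  rw [PowerSeries.coeff_mul] at this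
  simp only [qDeriv, PowerSeries.coeff_mk, PowerSeries.coeff_rescale] at this
  rw [Nat.sub_add_cancel hn] at this
  rw [Finset.Nat.sum_antidiagonal_eq_sum_range_succ_mk] at this
  rw [Nat.succ_eq_add_one, Nat.sub_add_cancel hn] at this
  rw [this]
  rw [show Finset.range n = Finset.Ico 0 n by rw [Finset.range_eq_Ico]]
  refine Finset.sum_nbij' (fun k => n - k) (fun i => n - i) ?_ ?_ ?_ ?_ ?_
  · intro k hk
    simp only [Finset.mem_Icc] at hk
    simp only [Finset.mem_Ico]
    omega
  · intro i hi
    simp only [Finset.mem_Ico] at hi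
    simp only [Finset.mem_Icc]
    omega
  · intro k hk; simp only [Finset.mem_Icc] at hk; omega
  · intro i hi; simp only [Finset.mem_Ico] at hi; omega
  · intro k hk
    simp only [Finset.mem_Icc] at hk
    have h1 : n - 1 - (n - k) = k - 1 := by omega
    have h2 : k - 1 + 1 = k := by omega
    rw [h1, h2]
    ring
end

section
/- For n ≥ 1, [n]_q! · e_n = ∑_k (-1)^{n-r} ([n-1]_q!/([k_1]_q [k_2]_q ⋯ [k_{r-1}]_q · [k_r]_q!)) · [p_{n-k_1}][p_{k_1-k_2}]⋯[p_{k_{r-1}-k_r}], where the sum extends over all strictly decreasing integer sequences k = (k_1, ..., k_r) with r ≥ 1 and n-1 ≥ k_1 > k_2 > ... > k_{r-1} > k_r = 0. -/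
/-- The q-factorial `[n]_q!`. -/
noncomputable def qFact {K : Type*} [CommRing K] (q : K) (n : ℕ) : K :=
  ∏ i ∈ Finset.range n, qInt q (i + 1)

/-- For a finite set `T = {k_1 > ... > k_{r-1}} ⊆ {1,...,n-1}` (together with `k_r = 0`),
the product `[p_{n-k_1}][p_{k_1-k_2}]⋯[p_{k_{r-1}-k_r}]` of the `p`'s over the gaps of the
chain `0 < k_{r-1} < ... < k_1 < n`. -/
noncomputable def gapProd {K : Type*} [CommRing K] (p : ℕ → K) (n : ℕ) (T : Finset ℕ) : K :=
  (((0 :: T.sort (· ≤ ·)) ++ [n]).zip (((0 :: T.sort (· ≤ ·)) ++ [n]).tail) |>.map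
    (fun ab => p (ab.2 - ab.1))).prod

/-- chain product helper -/
noncomputable def Zp {K : Type*} [CommRing K] (p : ℕ → K) (l : List ℕ) : K :=
  ((l.zip l.tail).map (fun ab => p (ab.2 - ab.1))).prod

lemma gapProd_eq_Zp {K : Type*} [CommRing K] (p : ℕ → K) (n : ℕ) (T : Finset ℕ) :
    gapProd p n T = Zp p ((0 :: T.sort (· ≤ ·)) ++ [n]) := rfl

lemma Zp_cons_cons {K : Type*} [CommRing K] (p : ℕ → K) (a b : ℕ) (l : List ℕ) :
    Zp p (a :: b :: l) = p (b - a) * Zp p (b :: l) := by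
  simp [Zp]

lemma Zp_append_pair {K : Type*} [CommRing K] (p : ℕ → K) :
    ∀ (l : List ℕ) (a b : ℕ), Zp p (l ++ [a, b]) = Zp p (l ++ [a]) * p (b - a)
  | [], a, b => by simp [Zp]
  | [c], a, b => by simp [Zp]
  | c :: d :: t, a, b => by
      have := Zp_append_pair p (d :: t) a b
      simp only [List.cons_append] at this ⊢
      rw [Zp_cons_cons, Zp_cons_cons, this]; ring

lemma sort_insert_max (k : ℕ) (S : Finset ℕ) (hk : ∀ x ∈ S, x ≤ k) (hknot : k ∉ S) :
    (insert k S).sort (· ≤ ·) = S.sort (· ≤ ·) ++ [k] := by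
  refine (fun h1 h2 h3 => List.Perm.eq_of_pairwise' (r := fun a b : ℕ => a ≤ b) h2 h3 h1) ?_ ?_ ?_
  · refine (Finset.sort_perm_toList _ _).trans ?_
    refine (Finset.toList_insert hknot).trans ?_
    refine (((Finset.sort_perm_toList S (· ≤ ·)).symm).cons k).trans ?_
    exact (List.perm_append_singleton k _).symm
  · exact Finset.pairwise_sort _ _
  · rw [List.pairwise_append]
    refine ⟨Finset.pairwise_sort _ _, List.pairwise_singleton _ _, ?_⟩
    intro a ha b hb
    simp only [List.mem_singleton] at hb
    subst hb
    exact hk a (by simpa [Finset.mem_sort] using ha)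

lemma gapProd_insert {K : Type*} [CommRing K] (p : ℕ → K) (n k : ℕ) (S : Finset ℕ)
    (hk : ∀ x ∈ S, x ≤ k) (hknot : k ∉ S) :
    gapProd p n (insert k S) = gapProd p k S * p (n - k) := by
  rw [gapProd_eq_Zp, gapProd_eq_Zp, sort_insert_max k S hk hknot]
  have : (0 :: (S.sort (· ≤ ·) ++ [k])) ++ [n]
      = (0 :: S.sort (· ≤ ·)) ++ [k, n] := by simp
  rw [this, Zp_append_pair]

lemma sum_powerset_Icc {K : Type*} [AddCommMonoid K] (g : Finset ℕ → K) :
    ∀ n : ℕ, ∑ T ∈ (Finset.Icc 1 n).powerset, g T =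
      g ∅ + ∑ k ∈ Finset.Icc 1 n, ∑ S ∈ (Finset.Icc 1 (k - 1)).powerset, g (insert k S)
  | 0 => by simp
  | (n + 1) => by
      have h1 : Finset.Icc 1 (n + 1) = insert (n + 1) (Finset.Icc 1 n) := by
        ext x; simp only [Finset.mem_Icc, Finset.mem_insert]; omega
      have h2 : (n + 1) ∉ Finset.Icc 1 n := by simp
      rw [h1, Finset.sum_powerset_insert h2, sum_powerset_Icc g n,
        Finset.sum_insert h2]
      simp only [Nat.add_sub_cancel]
      abel

lemma qFact_succ {K : Type*} [CommRing K] (q : K) (n : ℕ) :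
    qFact q (n + 1) = qFact q n * qInt q (n + 1) := Finset.prod_range_succ _ _

lemma qFact_ne_zero {K : Type*} [Field K] (q : K) (hq : ∀ m : ℕ, 1 ≤ m → qInt q m ≠ 0)
    (n : ℕ) : qFact q n ≠ 0 :=
  Finset.prod_ne_zero_iff.2 fun i _ => hq (i + 1) (by omega)

/-- Lemma 4.1: for `n ≥ 1`,
`[n]! eₙ = ∑_k (-1)^{n-r} [n-1]!/([k_1]⋯[k_{r-1}]·[k_r]!) [p_{n-k_1}]⋯[p_{k_{r-1}-k_r}]`,
the sum over all sequences `n-1 ≥ k_1 > ... > k_{r-1} > k_r = 0`, encoded by the set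
`T = {k_1,...,k_{r-1}} ⊆ {1,...,n-1}` (so `r = |T| + 1` and `[k_r]! = [0]! = 1`). -/
theorem stmt5 {K : Type*} [Field K] (q : K)
    (hq : ∀ m : ℕ, 1 ≤ m → qInt q m ≠ 0)
    (e p : ℕ → K) (he0 : e 0 = 1)
    (hdefp : qDeriv q (PowerSeries.mk e) =
      PowerSeries.mk e * PowerSeries.mk (fun n => (-1 : K) ^ n * p (n + 1))) :
    ∀ n : ℕ, 1 ≤ n →
      qFact q n * e n =
        ∑ T ∈ (Finset.Icc 1 (n - 1)).powerset,
          (-1 : K) ^ (n - (T.card + 1)) *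
            (qFact q (n - 1) / ∏ j ∈ T, qInt q j) * gapProd p n T := by
  -- the basic recurrence
  have hrec : ∀ n : ℕ, 1 ≤ n → qInt q n * e n =
      ∑ k ∈ Finset.range n, e k * ((-1 : K) ^ (n - 1 - k) * p (n - k)) := by
    intro n hn
    have := congrArg (PowerSeries.coeff (n - 1)) hdefp
    rw [PowerSeries.coeff_mul] at this
    simp only [qDeriv, PowerSeries.coeff_mk] at this
    rw [Finset.Nat.sum_antidiagonal_eq_sum_range_succ_mk] at this
    have hn1 : n - 1 + 1 = n := by omega
    rw [hn1] at this
    rw [this, show (n - 1).succ = n from hn1]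
    apply Finset.sum_congr rfl
    intro k hk
    have hk' : k ≤ n - 1 := by
      simp only [Finset.mem_range] at hk; omega
    have h2 : n - 1 - k + 1 = n - k := by omega
    simp [h2]
  intro n
  induction n using Nat.strong_induction_on with
  | _ n IH =>
    intro hn
    -- RHS via sum decomposition
    set g : Finset ℕ → K := fun T =>
      (-1 : K) ^ (n - (T.card + 1)) * (qFact q (n - 1) / ∏ j ∈ T, qInt q j) * gapProd p n T
      with hg
    rw [sum_powerset_Icc g (n - 1)]
    -- LHS via recurrence
    have hfact : qFact q n = qFact q (n - 1) * qInt q n := by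
      conv_lhs => rw [show n = (n - 1) + 1 by omega]
      rw [qFact_succ]
      congr 2
      omega
    rw [hfact, mul_assoc, hrec n hn, Finset.mul_sum]
    -- split off k = 0 term
    have hsplit : ∀ k ∈ Finset.range n, k ≠ 0 → (1 : ℕ) ≤ k := by omega
    rw [show Finset.range n = insert 0 (Finset.Icc 1 (n - 1)) by
      ext x; simp [Finset.mem_range, Finset.mem_Icc, Finset.mem_insert]; omega]
    rw [Finset.sum_insert (by simp)]
    congr 1
    · -- k = 0 term equals g ∅
      rw [hg]
      simp only [Finset.card_empty, Finset.prod_empty, div_one]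
      have : gapProd p n ∅ = p n := by
        simp [gapProd]
      rw [this, he0]
      simp only [Nat.sub_zero, Nat.sub_sub, zero_add]
      ring
    · -- remaining terms
      apply Finset.sum_congr rfl
      intro k hk
      simp only [Finset.mem_Icc] at hk
      have hk1 : 1 ≤ k := hk.1
      have hkn : k ≤ n - 1 := hk.2
      have hek := IH k (by omega) hk1
      have hfk : qFact q k ≠ 0 := qFact_ne_zero q hq k
      have hek' : e k = (∑ S ∈ (Finset.Icc 1 (k - 1)).powerset,
          (-1 : K) ^ (k - (S.card + 1)) * (qFact q (k - 1) / ∏ j ∈ S, qInt q j)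
            * gapProd p k S) / qFact q k := by
        rw [eq_div_iff hfk, mul_comm (e k)]
        exact hek
      rw [hek', div_mul_eq_mul_div, Finset.sum_mul, Finset.sum_div, Finset.mul_sum]
      apply Finset.sum_congr rfl
      intro S hS
      simp only [Finset.mem_powerset] at hS
      have hSmem : ∀ x ∈ S, 1 ≤ x ∧ x ≤ k - 1 := by
        intro x hx; exact Finset.mem_Icc.mp (hS hx)
      have hknotS : k ∉ S := fun h => by have := hSmem k h; omega
      have hSle : ∀ x ∈ S, x ≤ k := fun x hx => by have := hSmem x hx; omega
      have hcard : S.card ≤ k - 1 := by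
        calc S.card ≤ (Finset.Icc 1 (k - 1)).card := Finset.card_le_card hS
        _ = k - 1 := by rw [Nat.card_Icc]; omega
      rw [hg]
      simp only
      rw [gapProd_insert p n k S hSle hknotS,
        Finset.card_insert_of_notMem hknotS,
        Finset.prod_insert hknotS]
      have hsign : (-1 : K) ^ (n - (S.card + 1 + 1))
          = (-1 : K) ^ (n - 1 - k) * (-1 : K) ^ (k - (S.card + 1)) := by
        rw [← pow_add]
        congr 1
        omega
      rw [hsign]
      have hfk1 : qFact q k = qFact q (k - 1) * qInt q k := by
        conv_lhs => rw [show k = (k - 1) + 1 by omega]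
        rw [qFact_succ]; congr 2; omega
      have hPS : (∏ j ∈ S, qInt q j) ≠ 0 :=
        Finset.prod_ne_zero_iff.2 fun j hj => hq j (hSmem j hj).1
      have hik : qInt q k ≠ 0 := hq k hk1
      have hfk1' : qFact q (k - 1) ≠ 0 := qFact_ne_zero q hq _
      field_simp
      rw [hfk1]
      ring
end

section
/- For n ≥ 1, e_n = ∑_{|λ|=n} ε_λ [z_λ]_q^{-1} [p_λ]_q, where ε_λ = (-1)^{|λ|-ℓ(λ)}, [p_λ] = [p_{λ_1}]⋯[p_{λ_r}], and [z_λ]_q^{-1} = ∑_u ([n]_q [n-u_1]_q [n-u_1-u_2]_q ⋯ [u_r]_q)^{-1}, the sum ranging over all distinct permutations u = (u_1,...,u_r) of the parts of λ. -/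
/-- The finset of lists of positive naturals summing to `n` ("compositions of n"). -/
noncomputable def Comps (n : ℕ) : Finset (List ℕ) :=
  (Finset.univ : Finset (Nat.Partition n)).biUnion fun μ => μ.parts.toList.permutations.toFinset

lemma mem_Comps {n : ℕ} {u : List ℕ} :
    u ∈ Comps n ↔ u.sum = n ∧ ∀ x ∈ u, x ≠ 0 := by
  constructor
  · intro h
    simp only [Comps, Finset.mem_biUnion, Finset.mem_univ, true_and, List.mem_toFinset,
      List.mem_permutations] at h
    obtain ⟨μ, hμ⟩ := h
    have hcoe : (↑u : Multiset ℕ) = μ.parts := by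
      rw [← Multiset.coe_toList μ.parts, Multiset.coe_eq_coe]; exact hμ
    constructor
    · have := μ.parts_sum
      rw [← hcoe] at this
      simpa using this
    · intro x hx
      have hxp : x ∈ μ.parts := by rw [← hcoe]; simpa using hx
      exact (μ.parts_pos hxp).ne'
  · intro ⟨h1, h2⟩
    refine Finset.mem_biUnion.mpr ⟨⟨↑u, fun hi => Nat.pos_of_ne_zero (h2 _ (by simpa using hi)),
      by simpa using h1⟩, Finset.mem_univ _, ?_⟩
    rw [List.mem_toFinset, List.mem_permutations]
    exact (Multiset.coe_eq_coe.mp (Multiset.coe_toList _)).symm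

noncomputable def gfun {K : Type*} [Field K] (q : K) (p : ℕ → K) (n : ℕ) (u : List ℕ) : K :=
  (-1 : K) ^ (n - u.length) *
    (∏ i ∈ Finset.range u.length, qInt q (n - (u.take i).sum))⁻¹ * (u.map p).prod

lemma length_le_sum : ∀ (l : List ℕ), (∀ x ∈ l, x ≠ 0) → l.length ≤ l.sum := by
  intro l
  induction l with
  | nil => simp
  | cons a t ih =>
    intro h
    have ha : a ≠ 0 := h a (by simp)
    have := ih (fun x hx => h x (by simp [hx]))
    simp only [List.length_cons, List.sum_cons]
    omega

lemma comps_zero : Comps 0 = {([] : List ℕ)} := by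
  ext u
  simp only [mem_Comps, Finset.mem_singleton]
  constructor
  · rintro ⟨h1, h2⟩
    cases u with
    | nil => rfl
    | cons a t =>
      exfalso
      have : a ≠ 0 := h2 a (by simp)
      simp only [List.sum_cons] at h1
      omega
  · rintro rfl; simp

lemma gfun_cons {K : Type*} [Field K] (q : K) (p : ℕ → K) (n j : ℕ) (v : List ℕ)
    (hj : j ≤ n) (hv : v.sum = n - j) (hvp : ∀ x ∈ v, x ≠ 0) :
    gfun q p (n + 1) ((j + 1) :: v) =
      (qInt q (n + 1))⁻¹ * ((-1 : K) ^ j * p (j + 1)) * gfun q p (n - j) v := by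
  have hlen : v.length ≤ n - j := hv ▸ length_le_sum v hvp
  have hprod : ∏ i ∈ Finset.range (v.length + 1),
      qInt q ((n + 1) - (((j + 1) :: v).take i).sum)
      = (∏ i ∈ Finset.range v.length, qInt q ((n - j) - (v.take i).sum)) * qInt q (n + 1) := by
    rw [Finset.prod_range_succ']
    have hzero : qInt q ((n + 1) - (((j + 1) :: v).take 0).sum) = qInt q (n + 1) := by
      simp
    rw [hzero]
    congr 1
    refine Finset.prod_congr rfl fun i _ => ?_
    have : (n + 1) - (((j + 1) :: v).take (i + 1)).sum = (n - j) - (v.take i).sum := by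
      rw [List.take_succ_cons, List.sum_cons]
      omega
    rw [this]
  simp only [gfun, List.map_cons, List.prod_cons, List.length_cons, hprod, mul_inv]
  rw [show (n + 1) - (v.length + 1) = j + ((n - j) - v.length) from by omega, pow_add]
  rcases eq_or_ne (qInt q (n + 1)) 0 with h0 | h0
  · simp [h0]
  · field_simp

lemma comps_rec {K : Type*} [Field K] (q : K) (p : ℕ → K) (n : ℕ) :
    ∑ u ∈ Comps (n + 1), gfun q p (n + 1) u =
      ∑ j ∈ Finset.range (n + 1),
        (qInt q (n + 1))⁻¹ * ((-1 : K) ^ j * p (j + 1)) *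
          ∑ v ∈ Comps (n - j), gfun q p (n - j) v := by
  have hrw : ∀ j ∈ Finset.range (n + 1),
      (qInt q (n + 1))⁻¹ * ((-1 : K) ^ j * p (j + 1)) * ∑ v ∈ Comps (n - j), gfun q p (n - j) v
      = ∑ v ∈ Comps (n - j),
          (qInt q (n + 1))⁻¹ * ((-1 : K) ^ j * p (j + 1)) * gfun q p (n - j) v := by
    intro j _; rw [Finset.mul_sum]
  rw [Finset.sum_congr rfl hrw]
  have hs := Finset.sum_sigma (Finset.range (n + 1)) (fun j => Comps (n - j))
    (fun x : Σ _ : ℕ, List ℕ =>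
      (qInt q (n + 1))⁻¹ * ((-1 : K) ^ x.1 * p (x.1 + 1)) * gfun q p (n - x.1) x.2)
  rw [← hs]
  refine Finset.sum_nbij' (fun u : List ℕ => (⟨u.head! - 1, u.tail⟩ : Σ _ : ℕ, List ℕ))
    (fun x : Σ _ : ℕ, List ℕ => (x.1 + 1) :: x.2) ?_ ?_ ?_ ?_ ?_
  · intro u hu
    rw [mem_Comps] at hu
    obtain ⟨h1, h2⟩ := hu
    match u with
    | [] => simp at h1
    | a :: t =>
      have ha : a ≠ 0 := h2 a (by simp)
      simp only [List.sum_cons] at h1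
      simp only [List.head!_cons, List.tail_cons, Finset.mem_sigma, Finset.mem_range, mem_Comps]
      refine ⟨by omega, by omega, fun x hx => h2 x (by simp [hx])⟩
  · intro x hx
    rw [Finset.mem_sigma, Finset.mem_range, mem_Comps] at hx
    obtain ⟨h1, h2, h3⟩ := hx
    rw [mem_Comps]
    constructor
    · simp only [List.sum_cons]; omega
    · intro y hy
      rcases List.mem_cons.mp hy with h | h
      · omega
      · exact h3 y h
  · intro u hu
    rw [mem_Comps] at hu
    obtain ⟨h1, h2⟩ := hu
    match u with
    | [] => simp at h1
    | a :: t =>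
      have ha : a ≠ 0 := h2 a (by simp)
      simp only [List.head!_cons, List.tail_cons]
      congr 1
      omega
  · intro x _
    rcases x with ⟨j, v⟩
    simp
  · intro u hu
    rw [mem_Comps] at hu
    obtain ⟨h1, h2⟩ := hu
    match u with
    | [] => simp at h1
    | a :: t =>
      have ha : a ≠ 0 := h2 a (by simp)
      simp only [List.sum_cons] at h1
      simp only [List.head!_cons, List.tail_cons]
      have hkey := gfun_cons q p n (a - 1) t (by omega) (by omega)
        (fun x hx => h2 x (by simp [hx]))
      rw [show a - 1 + 1 = a from by omega] at hkey ⊢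
      exact hkey

lemma regroup {K : Type*} [Field K] (q : K) (p : ℕ → K) (n : ℕ) :
    (∑ μ : Nat.Partition n,
      (-1 : K) ^ (n - Multiset.card μ.parts) *
        (∑ u ∈ μ.parts.toList.permutations.toFinset,
          (∏ i ∈ Finset.range u.length, qInt q (n - (u.take i).sum))⁻¹) *
        (μ.parts.map p).prod)
    = ∑ u ∈ Comps n, gfun q p n u := by
  have hdisj : (↑(Finset.univ : Finset (Nat.Partition n)) :
      Set (Nat.Partition n)).PairwiseDisjoint
      (fun μ : Nat.Partition n => μ.parts.toList.permutations.toFinset) := by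
    intro μ _ ν _ hne
    rw [Function.onFun, Finset.disjoint_left]
    intro u hu hu'
    rw [List.mem_toFinset, List.mem_permutations] at hu hu'
    refine hne ?_
    have hparts : μ.parts = ν.parts := by
      rw [← Multiset.coe_toList μ.parts, ← Multiset.coe_toList ν.parts, Multiset.coe_eq_coe]
      exact hu.symm.trans hu'
    cases μ; cases ν
    simpa using hparts
  rw [Comps, Finset.sum_biUnion hdisj]
  refine Finset.sum_congr rfl fun μ _ => ?_
  rw [Finset.mul_sum, Finset.sum_mul]
  refine Finset.sum_congr rfl fun u hu => ?_
  rw [List.mem_toFinset, List.mem_permutations] at hu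
  have hcoe : (↑u : Multiset ℕ) = μ.parts := by
    rw [← Multiset.coe_toList μ.parts, Multiset.coe_eq_coe]; exact hu
  have hlen : u.length = Multiset.card μ.parts := by rw [← hcoe]; simp
  have hp : (u.map p).prod = (μ.parts.map p).prod := by rw [← hcoe]; simp
  simp only [gfun, hlen, hp]

/-- Theorem 4.2. -/
theorem stmt6 {K : Type*} [Field K] (q : K)
    (hq : ∀ m : ℕ, 1 ≤ m → qInt q m ≠ 0)
    (e p : ℕ → K) (he0 : e 0 = 1)
    (hdefp : qDeriv q (PowerSeries.mk e) =
      PowerSeries.mk e * PowerSeries.mk (fun n => (-1 : K) ^ n * p (n + 1))) :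
    ∀ n : ℕ, 1 ≤ n →
      e n = ∑ μ : Nat.Partition n,
        (-1 : K) ^ (n - Multiset.card μ.parts) *
          (∑ u ∈ μ.parts.toList.permutations.toFinset,
            (∏ i ∈ Finset.range u.length, qInt q (n - (u.take i).sum))⁻¹) *
          (μ.parts.map p).prod := by
  have key : ∀ n : ℕ, e n = ∑ u ∈ Comps n, gfun q p n u := by
    intro n
    induction n using Nat.strong_induction_on with
    | _ n ih =>
      cases n with
      | zero =>
        rw [comps_zero, Finset.sum_singleton]
        simp [gfun, he0]
      | succ m =>
        have hcoeff := congrArg (PowerSeries.coeff m) hdefp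
        rw [qDeriv] at hcoeff
        simp only [PowerSeries.coeff_mk, PowerSeries.coeff_mul] at hcoeff
        rw [Finset.Nat.sum_antidiagonal_eq_sum_range_succ_mk] at hcoeff
        rw [← Finset.sum_range_reflect] at hcoeff
        have hcongr : ∀ j ∈ Finset.range (m + 1),
            e (m + 1 - 1 - j) * ((-1 : K) ^ (m - (m + 1 - 1 - j)) * p (m - (m + 1 - 1 - j) + 1))
            = (∑ v ∈ Comps (m - j), gfun q p (m - j) v) * ((-1 : K) ^ j * p (j + 1)) := by
          intro j hj
          rw [Finset.mem_range] at hj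
          have h1 : m + 1 - 1 - j = m - j := by omega
          have h2 : m - (m - j) = j := by omega
          rw [h1, h2, ih (m - j) (by omega)]
        rw [Finset.sum_congr rfl hcongr] at hcoeff
        have hne := hq (m + 1) (by omega)
        have hstep : e (m + 1) = (qInt q (m + 1))⁻¹ * (qInt q (m + 1) * e (m + 1)) := by
          rw [← mul_assoc, inv_mul_cancel₀ hne, one_mul]
        rw [comps_rec q p m, hstep, hcoeff, Finset.mul_sum]
        refine Finset.sum_congr rfl fun j _ => ?_
        ring
  intro n _
  rw [key n, ← regroup q p n]
end

section
/- Let G(t) = ∑_{n≥0} g_n t^n/[n]_q! and F(t) a formal power series with F(0)=0. Define the q-composition G[F]_q = ∑_{k≥0} g_k F^{[k]}/[k]_q!, where F^{[k]} is the Gessel q-power. Then D_q(G[F]_q) = (D_q G)[F]_q · D_q F. -/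
/-- Proposition 5.3: for the Gessel q-composition `G[F]_q = ∑_k g_k F^{[k]}/[k]!`
(here `Cs = G[F]_q` and `Ds = (D_q G)[F]_q`, described coefficientwise, with
`G = ∑ₙ gₙ tⁿ/[n]!` and `F^{[k]}` the Gessel q-powers of `F`),
one has `D_q (G[F]_q) = (D_q G)[F]_q ⬝ D_q F`. -/
theorem stmt10 {K : Type*} [Field K] (q : K)
    (hq : ∀ m : ℕ, 1 ≤ m → qInt q m ≠ 0)
    (F : PowerSeries K) (hF0 : PowerSeries.constantCoeff F = 0)
    (Fk : ℕ → PowerSeries K) (hFk0 : Fk 0 = 1)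
    (hFkc : ∀ k, 0 < k → PowerSeries.constantCoeff (Fk k) = 0)
    (hFkrec : ∀ k, 0 < k → qDeriv q (Fk k) =
      PowerSeries.C (qInt q k) * Fk (k - 1) * qDeriv q F)
    (g : ℕ → K) (Cs Ds : PowerSeries K)
    (hC : ∀ n, PowerSeries.coeff n Cs =
      ∑ k ∈ Finset.range (n + 1), g k / qFact q k * PowerSeries.coeff n (Fk k))
    (hD : ∀ n, PowerSeries.coeff n Ds =
      ∑ k ∈ Finset.range (n + 1), g (k + 1) / qFact q k * PowerSeries.coeff n (Fk k)) :
    qDeriv q Cs = Ds * qDeriv q F := by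

  have hcoeffD : ∀ (G : PowerSeries K) (n : ℕ), PowerSeries.coeff n (qDeriv q G) =
      qInt q (n + 1) * PowerSeries.coeff (n + 1) G := by
    intro G n; simp [qDeriv]
  have vanish : ∀ n k : ℕ, n < k → PowerSeries.coeff n (Fk k) = 0 := by
    intro n
    induction n using Nat.strong_induction_on with
    | _ n ih =>
      intro k hk
      match n, hk with
      | 0, hk =>
        simpa [PowerSeries.coeff_zero_eq_constantCoeff] using hFkc k hk
      | (n+1), hk =>
        have hk0 : 0 < k := by omega
        have h := congrArg (PowerSeries.coeff n) (hFkrec k hk0)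
        rw [hcoeffD] at h
        have hne := hq (n + 1) (by omega)
        have hz : PowerSeries.coeff n
            (PowerSeries.C (qInt q k) * Fk (k - 1) * qDeriv q F) = 0 := by
          rw [mul_assoc, PowerSeries.coeff_C_mul, PowerSeries.coeff_mul,
            Finset.sum_eq_zero, mul_zero]
          intro p hp
          have hp' := Finset.HasAntidiagonal.mem_antidiagonal.mp hp
          rw [ih p.1 (by omega) (k - 1) (by omega), zero_mul]
        rw [hz] at h
        exact (mul_eq_zero.mp h).resolve_left hne
  ext n
  rw [hcoeffD, hC (n + 1), Finset.mul_sum, Finset.sum_range_succ']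
  have h0 : PowerSeries.coeff (n + 1) (Fk 0) = 0 := by
    rw [hFk0]; simp
  rw [h0]
  have hstep : ∀ j : ℕ, qInt q (n + 1) * (g (j + 1) / qFact q (j + 1) *
      PowerSeries.coeff (n + 1) (Fk (j + 1))) =
      g (j + 1) / qFact q j * PowerSeries.coeff n (Fk j * qDeriv q F) := by
    intro j
    have h := congrArg (PowerSeries.coeff n) (hFkrec (j + 1) (by omega))
    rw [hcoeffD] at h
    simp only [Nat.add_sub_cancel] at h
    rw [mul_assoc, PowerSeries.coeff_C_mul] at h
    have hfact : qFact q (j + 1) = qFact q j * qInt q (j + 1) :=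
      Finset.prod_range_succ _ _
    have hne1 := hq (j + 1) (by omega)
    have hne2 : qFact q j ≠ 0 := by
      intro hz
      rw [qFact] at hz
      obtain ⟨i, _, hi⟩ := Finset.prod_eq_zero_iff.mp hz
      exact hq (i + 1) (by omega) hi
    calc qInt q (n + 1) * (g (j + 1) / qFact q (j + 1) *
        PowerSeries.coeff (n + 1) (Fk (j + 1)))
        = g (j + 1) / qFact q (j + 1) *
          (qInt q (n + 1) * PowerSeries.coeff (n + 1) (Fk (j + 1))) := by ring
      _ = g (j + 1) / qFact q (j + 1) * (qInt q (j + 1) *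
          PowerSeries.coeff n (Fk j * qDeriv q F)) := by rw [h]
      _ = g (j + 1) / qFact q j * PowerSeries.coeff n (Fk j * qDeriv q F) := by
          rw [hfact]; field_simp
  simp only [hstep, mul_zero, add_zero]
  rw [PowerSeries.coeff_mul]
  have hDs : ∀ p ∈ Finset.HasAntidiagonal.antidiagonal n,
      PowerSeries.coeff p.1 Ds * PowerSeries.coeff p.2 (qDeriv q F) =
      ∑ j ∈ Finset.range (n + 1), g (j + 1) / qFact q j *
        PowerSeries.coeff p.1 (Fk j) * PowerSeries.coeff p.2 (qDeriv q F) := by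
    intro p hp
    have hp' := Finset.HasAntidiagonal.mem_antidiagonal.mp hp
    rw [hD p.1]
    rw [Finset.sum_subset (Finset.range_subset_range.mpr (by omega : p.1 + 1 ≤ n + 1))]
    · rw [Finset.sum_mul]
    · intro j hj hj2
      simp only [Finset.mem_range, not_lt] at hj2
      rw [vanish p.1 j (by omega), mul_zero]
  rw [Finset.sum_congr rfl hDs, Finset.sum_comm]
  apply Finset.sum_congr rfl
  intro j _
  rw [PowerSeries.coeff_mul, Finset.mul_sum]
  apply Finset.sum_congr rfl
  intro p _
  ring
end

section
/- Let e_q(t) = ∑_{n≥0} t^n/[n]_q! and F(t) = ∑_{n≥1} f_n t^n/[n]_q!. Then e_q[F]_q = ∑_{n≥0} γ_n t^n/[n]_q! if and only if γ_0 = 1 and γ_{n+1} = ∑_{k=0}^n binom[n,k]_q γ_{n-k} f_{k+1} for all n ≥ 0, where binom[n,k]_q is the Gaussian binomial coefficient. -/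
/-- The Gaussian binomial coefficient `[n]!/([k]![n-k]!)`. -/
noncomputable def qBinom {K : Type*} [Field K] (q : K) (n k : ℕ) : K :=
  qFact q n / (qFact q k * qFact q (n - k))

lemma qFact_zero {K : Type*} [CommRing K] (q : K) : qFact q 0 = 1 := by
  simp [qFact]

lemma coeff_qDeriv {K : Type*} [CommRing K] (q : K) (G : PowerSeries K) (n : ℕ) :
    PowerSeries.coeff n (qDeriv q G) = qInt q (n + 1) * PowerSeries.coeff (n + 1) G := by
  simp [qDeriv]

lemma Fk_low {K : Type*} [Field K] (q : K)
    (hq : ∀ m : ℕ, 1 ≤ m → qInt q m ≠ 0)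
    (F : PowerSeries K) (Fk : ℕ → PowerSeries K)
    (hFkc : ∀ k, 0 < k → PowerSeries.constantCoeff (Fk k) = 0)
    (hFkrec : ∀ k, 0 < k → qDeriv q (Fk k) =
      PowerSeries.C (qInt q k) * Fk (k - 1) * qDeriv q F) :
    ∀ j i, i < j → PowerSeries.coeff i (Fk j) = 0 := by
  intro j
  induction j with
  | zero => intro i h; omega
  | succ j ih =>
    intro i hi
    match i with
    | 0 => simpa [← PowerSeries.coeff_zero_eq_constantCoeff] using hFkc (j + 1) (by omega)
    | Nat.succ m =>
      have hmj : m < j := by omega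
      have h1 : qInt q (m + 1) * PowerSeries.coeff (m + 1) (Fk (j + 1)) = 0 := by
        have h2 := congrArg (PowerSeries.coeff m) (hFkrec (j + 1) (by omega))
        rw [coeff_qDeriv] at h2
        rw [h2]
        simp only [Nat.add_sub_cancel, mul_assoc, PowerSeries.coeff_C_mul]
        rw [PowerSeries.coeff_mul]
        rw [Finset.sum_eq_zero, mul_zero]
        intro p hp
        have hp1 : p.1 ≤ m := by
          have := Finset.HasAntidiagonal.mem_antidiagonal.mp hp; omega
        rw [ih p.1 (by omega), zero_mul]
      have := hq (m + 1) (by omega)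
      exact (mul_eq_zero.mp h1).resolve_left this

lemma key_lemma {K : Type*} [Field K] (q : K)
    (hq : ∀ m : ℕ, 1 ≤ m → qInt q m ≠ 0)
    (f : ℕ → K)
    (F : PowerSeries K) (hFdef : F = PowerSeries.mk fun n => f n / qFact q n)
    (Fk : ℕ → PowerSeries K) (hFk0 : Fk 0 = 1)
    (hFkc : ∀ k, 0 < k → PowerSeries.constantCoeff (Fk k) = 0)
    (hFkrec : ∀ k, 0 < k → qDeriv q (Fk k) =
      PowerSeries.C (qInt q k) * Fk (k - 1) * qDeriv q F)
    (Cs : PowerSeries K)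
    (hC : ∀ n, PowerSeries.coeff n Cs =
      ∑ k ∈ Finset.range (n + 1), (qFact q k)⁻¹ * PowerSeries.coeff n (Fk k))
    (n : ℕ) :
    qInt q (n + 1) * PowerSeries.coeff (n + 1) Cs =
      ∑ i ∈ Finset.range (n + 1),
        PowerSeries.coeff i Cs * (f (n + 1 - i) / qFact q (n - i)) := by
  have hFact := qFact_ne_zero q hq
  have hcoeffF : ∀ m : ℕ, PowerSeries.coeff m F = f m / qFact q m := by
    intro m; rw [hFdef]; simp
  have hDF : ∀ m : ℕ, PowerSeries.coeff m (qDeriv q F) = f (m + 1) / qFact q m := by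
    intro m
    rw [coeff_qDeriv, hcoeffF, qFact_succ, ← div_div, mul_comm,
      div_mul_cancel₀ _ (hq (m + 1) (by omega))]
  rw [hC (n + 1), Finset.mul_sum, Finset.sum_range_succ']
  have h0 : qInt q (n + 1) * ((qFact q 0)⁻¹ * PowerSeries.coeff (n + 1) (Fk 0)) = 0 := by
    rw [hFk0]
    simp [PowerSeries.coeff_one]
  rw [h0, add_zero]
  have hstep : ∀ k ∈ Finset.range (n + 1),
      qInt q (n + 1) * ((qFact q (k + 1))⁻¹ * PowerSeries.coeff (n + 1) (Fk (k + 1))) =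
      ∑ i ∈ Finset.range (n + 1),
        ((qFact q k)⁻¹ * PowerSeries.coeff i (Fk k)) * (f (n + 1 - i) / qFact q (n - i)) := by
    intro k _hk
    have h2 := congrArg (PowerSeries.coeff n) (hFkrec (k + 1) (by omega))
    rw [coeff_qDeriv] at h2
    have h3 : qInt q (n + 1) * ((qFact q (k + 1))⁻¹ * PowerSeries.coeff (n + 1) (Fk (k + 1)))
        = (qFact q (k + 1))⁻¹ * (qInt q (n + 1) * PowerSeries.coeff (n + 1) (Fk (k + 1)))
        := by ring
    rw [h3, h2]
    simp only [Nat.add_sub_cancel, mul_assoc, PowerSeries.coeff_C_mul]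
    rw [PowerSeries.coeff_mul, Finset.Nat.sum_antidiagonal_eq_sum_range_succ_mk,
      Finset.mul_sum, Finset.mul_sum]
    refine Finset.sum_congr rfl fun i hi => ?_
    have hin : i ≤ n := Nat.lt_succ_iff.mp (Finset.mem_range.mp hi)
    rw [hDF (n - i)]
    have hni : n - i + 1 = n + 1 - i := by omega
    rw [hni]
    have hfk : (qFact q (k + 1))⁻¹ * qInt q (k + 1) = (qFact q k)⁻¹ := by
      rw [qFact_succ, mul_inv, mul_assoc, inv_mul_cancel₀ (hq (k + 1) (by omega)), mul_one]
    calc (qFact q (k + 1))⁻¹ * (qInt q (k + 1) *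
            (PowerSeries.coeff i (Fk k) * (f (n + 1 - i) / qFact q (n - i))))
        = ((qFact q (k + 1))⁻¹ * qInt q (k + 1)) *
            (PowerSeries.coeff i (Fk k) * (f (n + 1 - i) / qFact q (n - i))) := by ring
      _ = _ := by rw [hfk]; try ring
  rw [Finset.sum_congr rfl hstep, Finset.sum_comm]
  refine Finset.sum_congr rfl fun i hi => ?_
  have hin : i ≤ n := Nat.lt_succ_iff.mp (Finset.mem_range.mp hi)
  rw [← Finset.sum_mul]
  congr 1
  rw [hC i]
  symm
  apply Finset.sum_subset
  · intro x hx
    exact Finset.mem_range.mpr (by have := Finset.mem_range.mp hx; omega)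
  · intro x _hx hxn
    have hix : i < x := by
      by_contra h
      exact hxn (Finset.mem_range.mpr (by omega))
    rw [Fk_low q hq F Fk hFkc hFkrec x i hix, mul_zero]

lemma alg_lemma {K : Type*} [Field K] (q : K)
    (hq : ∀ m : ℕ, 1 ≤ m → qInt q m ≠ 0)
    (f : ℕ → K) (a : ℕ → K) (n : ℕ) :
    ∑ i ∈ Finset.range (n + 1), (a i / qFact q i) * (f (n + 1 - i) / qFact q (n - i)) =
    (∑ k ∈ Finset.range (n + 1), qBinom q n k * a (n - k) * f (k + 1)) / qFact q n := by
  have hFact := qFact_ne_zero q hq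
  rw [Finset.sum_div,
    ← Finset.sum_range_reflect (fun k => qBinom q n k * a (n - k) * f (k + 1) / qFact q n) (n + 1)]
  refine Finset.sum_congr rfl fun i hi => ?_
  have hin : i ≤ n := Nat.lt_succ_iff.mp (Finset.mem_range.mp hi)
  have h1 : n + 1 - 1 - i = n - i := by omega
  have h2 : n - (n - i) = i := by omega
  have h3 : n - i + 1 = n + 1 - i := by omega
  rw [h1, h2, h3]
  rw [qBinom, h2]
  rw [div_mul_div_comm, div_mul_eq_mul_div, div_mul_eq_mul_div, div_div,
    div_eq_div_iff (mul_ne_zero (hFact i) (hFact (n - i)))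
      (mul_ne_zero (mul_ne_zero (hFact (n - i)) (hFact i)) (hFact n))]
  ring

/-- Proposition 5.4: with `F = ∑_{n≥1} fₙ tⁿ/[n]!` and `F^{[k]}` its Gessel q-powers,
and `Cs = e_q[F]_q = ∑_k F^{[k]}/[k]!` (coefficientwise),
`e_q[F]_q = ∑ γₙ tⁿ/[n]!` holds iff `γ₀ = 1` and
`γ_{n+1} = ∑_{k=0}^n [n,k]_q γ_{n-k} f_{k+1}`. -/
theorem stmt11 {K : Type*} [Field K] (q : K)
    (hq : ∀ m : ℕ, 1 ≤ m → qInt q m ≠ 0)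
    (f : ℕ → K) (hf0 : f 0 = 0)
    (F : PowerSeries K) (hFdef : F = PowerSeries.mk fun n => f n / qFact q n)
    (Fk : ℕ → PowerSeries K) (hFk0 : Fk 0 = 1)
    (hFkc : ∀ k, 0 < k → PowerSeries.constantCoeff (Fk k) = 0)
    (hFkrec : ∀ k, 0 < k → qDeriv q (Fk k) =
      PowerSeries.C (qInt q k) * Fk (k - 1) * qDeriv q F)
    (Cs : PowerSeries K)
    (hC : ∀ n, PowerSeries.coeff n Cs =
      ∑ k ∈ Finset.range (n + 1), (qFact q k)⁻¹ * PowerSeries.coeff n (Fk k))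
    (γ : ℕ → K) :
    (∀ n, PowerSeries.coeff n Cs = γ n / qFact q n) ↔
      (γ 0 = 1 ∧ ∀ n, γ (n + 1) =
        ∑ k ∈ Finset.range (n + 1), qBinom q n k * γ (n - k) * f (k + 1)) := by
  have hFact := qFact_ne_zero q hq
  have hkey := key_lemma q hq f F hFdef Fk hFk0 hFkc hFkrec Cs hC
  have hcoeff0 : PowerSeries.coeff 0 Cs = 1 := by
    rw [hC 0]
    simp [hFk0, qFact_zero]
  constructor
  · intro h
    have hg0 : γ 0 = 1 := by
      have h0 := h 0
      rw [hcoeff0, qFact_zero, div_one] at h0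
      exact h0.symm
    refine ⟨hg0, fun n => ?_⟩
    have h1 := hkey n
    rw [h (n + 1)] at h1
    have h2 : ∀ i ∈ Finset.range (n + 1),
        PowerSeries.coeff i Cs * (f (n + 1 - i) / qFact q (n - i)) =
        (γ i / qFact q i) * (f (n + 1 - i) / qFact q (n - i)) := fun i _ => by rw [h i]
    rw [Finset.sum_congr rfl h2, alg_lemma q hq f γ n] at h1
    have h3 : qInt q (n + 1) * (γ (n + 1) / qFact q (n + 1)) = γ (n + 1) / qFact q n := by
      rw [qFact_succ, ← div_div, mul_comm, div_mul_cancel₀ _ (hq (n + 1) (by omega))]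
    rw [h3] at h1
    rw [div_eq_div_iff (hFact n) (hFact n)] at h1
    exact mul_right_cancel₀ (hFact n) h1
  · rintro ⟨hg0, hrec⟩ n
    induction n using Nat.strong_induction_on with
    | _ n ih =>
      match n with
      | 0 => rw [hcoeff0, hg0, qFact_zero, div_one]
      | Nat.succ m =>
        have h1 := hkey m
        have h2 : ∀ i ∈ Finset.range (m + 1),
            PowerSeries.coeff i Cs * (f (m + 1 - i) / qFact q (m - i)) =
            (γ i / qFact q i) * (f (m + 1 - i) / qFact q (m - i)) := by
          intro i hi
          rw [ih i (by have := Finset.mem_range.mp hi; omega)]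
        rw [Finset.sum_congr rfl h2, alg_lemma q hq f γ m, ← hrec m] at h1
        have hne := hq (m + 1) (by omega)
        have : PowerSeries.coeff (m + 1) Cs = γ (m + 1) / (qFact q m * qInt q (m + 1)) := by
          rw [eq_div_iff (mul_ne_zero (hFact m) hne)]
          have h4 : qInt q (m + 1) * PowerSeries.coeff (m + 1) Cs * qFact q m = γ (m + 1) := by
            rw [h1]; exact div_mul_cancel₀ _ (hFact m)
          linear_combination h4
        rw [this, qFact_succ]
end

section
/- Let P_q(t) = ∑_{n≥1} ([p_n]/[n]_q) t^n. Then E(t) = ∑_{n≥0} e_n t^n = e_q[ -P_q(-t) ]_q, where e_q(t) = ∑_{n≥0} t^n/[n]_q! and [·]_q denotes Gessel q-composition. -/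
/-- Theorem 5.5: with `P_q(t) = ∑_{n≥1} ([pₙ]/[n]) tⁿ` and `F = -P_q(-t)`
(coefficient of `tⁿ` equal to `(-1)^{n-1}[pₙ]/[n]`), and `F^{[k]}` the Gessel q-powers
of `F`, one has `E(t) = e_q[-P_q(-t)]_q`, i.e. `eₙ = ∑_k (1/[k]!) ⬝ coeff n F^{[k]}`. -/
theorem stmt12 {K : Type*} [Field K] (q : K)
    (hq : ∀ m : ℕ, 1 ≤ m → qInt q m ≠ 0)
    (e p : ℕ → K) (he0 : e 0 = 1)
    (hdefp : qDeriv q (PowerSeries.mk e) =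
      PowerSeries.mk e * PowerSeries.mk (fun n => (-1 : K) ^ n * p (n + 1)))
    (F : PowerSeries K)
    (hFdef : F = PowerSeries.mk fun n =>
      if n = 0 then 0 else (-1 : K) ^ (n - 1) * p n / qInt q n)
    (Fk : ℕ → PowerSeries K) (hFk0 : Fk 0 = 1)
    (hFkc : ∀ k, 0 < k → PowerSeries.constantCoeff (Fk k) = 0)
    (hFkrec : ∀ k, 0 < k → qDeriv q (Fk k) =
      PowerSeries.C (qInt q k) * Fk (k - 1) * qDeriv q F) :
    ∀ n, e n = ∑ k ∈ Finset.range (n + 1),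
      (qFact q k)⁻¹ * PowerSeries.coeff n (Fk k) := by
  have hcoeffD : ∀ (G : PowerSeries K) (n : ℕ), PowerSeries.coeff n (qDeriv q G)
      = qInt q (n + 1) * PowerSeries.coeff (n + 1) G := by
    intro G n; simp [qDeriv]
  have hqF0 : qFact q 0 = 1 := by simp [qFact]
  have hqFs : ∀ k, qFact q (k + 1) = qFact q k * qInt q (k + 1) := by
    intro k; simp [qFact, Finset.prod_range_succ]
  have hqFne : ∀ k, qFact q k ≠ 0 := by
    intro k; induction k with
    | zero => simp [hqF0]
    | succ k ih => rw [hqFs]; exact mul_ne_zero ih (hq (k + 1) (by omega))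
  -- coefficients of D_q F
  have hDF : ∀ m, PowerSeries.coeff m (qDeriv q F) = (-1 : K) ^ m * p (m + 1) := by
    intro m
    rw [hcoeffD, hFdef]
    simp only [PowerSeries.coeff_mk, Nat.add_sub_cancel, if_neg (Nat.succ_ne_zero m)]
    field_simp [hq (m + 1) (by omega)]
  -- order lemma: coeff n (Fk k) = 0 for n < k
  have horder : ∀ k n, n < k → PowerSeries.coeff n (Fk k) = 0 := by
    intro k
    induction k with
    | zero => intro n h; omega
    | succ k ih =>
      intro n hn
      cases n with
      | zero =>
        simpa using hFkc (k + 1) (by omega)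
      | succ m =>
        have hm : m < k := by omega
        have h1 : qInt q (m + 1) * PowerSeries.coeff (m + 1) (Fk (k + 1)) = 0 := by
          rw [← hcoeffD, hFkrec (k + 1) (by omega)]
          simp only [Nat.add_sub_cancel]
          rw [mul_assoc, PowerSeries.coeff_C_mul, PowerSeries.coeff_mul]
          rw [Finset.sum_eq_zero, mul_zero]
          intro x hx
          have hx1 : x.1 + x.2 = m := Finset.HasAntidiagonal.mem_antidiagonal.mp hx
          rw [ih x.1 (by omega), zero_mul]
        have := hq (m + 1) (by omega)
        exact (mul_eq_zero.mp h1).resolve_left this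
  set S : ℕ → K := fun n => ∑ k ∈ Finset.range (n + 1),
      (qFact q k)⁻¹ * PowerSeries.coeff n (Fk k) with hS
  -- stabilization
  have hSstab : ∀ n N, n < N → ∑ k ∈ Finset.range N,
      (qFact q k)⁻¹ * PowerSeries.coeff n (Fk k) = S n := by
    intro n N hnN
    rw [hS]
    refine (Finset.sum_subset ?_ ?_).symm
    · intro k hk
      simp only [Finset.mem_range] at hk ⊢; omega
    · intro k hk hk'
      simp only [Finset.mem_range, not_lt] at hk hk'
      rw [horder k n (by omega), mul_zero]
  -- the ODE for S
  have hODE : ∀ n, qInt q (n + 1) * S (n + 1) =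
      ∑ x ∈ Finset.HasAntidiagonal.antidiagonal n, S x.1 * ((-1 : K) ^ x.2 * p (x.2 + 1)) := by
    intro n
    have step1 : qInt q (n + 1) * S (n + 1) = ∑ k ∈ Finset.range (n + 2),
        (qFact q k)⁻¹ * PowerSeries.coeff n (qDeriv q (Fk k)) := by
      rw [hS, Finset.mul_sum]
      refine Finset.sum_congr rfl fun k _ => ?_
      rw [hcoeffD]; ring
    rw [step1, Finset.sum_range_succ']
    have hk0 : (qFact q 0)⁻¹ * PowerSeries.coeff n (qDeriv q (Fk 0)) = 0 := by
      rw [hFk0, hcoeffD]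
      simp [PowerSeries.coeff_one]
    rw [hk0, add_zero]
    have step2 : ∀ k, (qFact q (k + 1))⁻¹ * PowerSeries.coeff n (qDeriv q (Fk (k + 1)))
        = (qFact q k)⁻¹ * PowerSeries.coeff n (Fk k * qDeriv q F) := by
      intro k
      rw [hFkrec (k + 1) (by omega)]
      simp only [Nat.add_sub_cancel]
      rw [mul_assoc, PowerSeries.coeff_C_mul, hqFs, mul_inv]
      rw [← mul_assoc, mul_assoc ((qFact q k)⁻¹), inv_mul_cancel₀ (hq (k + 1) (by omega)),
        mul_one]
    calc ∑ k ∈ Finset.range (n + 1),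
          (qFact q (k + 1))⁻¹ * PowerSeries.coeff n (qDeriv q (Fk (k + 1)))
        = ∑ k ∈ Finset.range (n + 1),
          (qFact q k)⁻¹ * PowerSeries.coeff n (Fk k * qDeriv q F) := by
          exact Finset.sum_congr rfl fun k _ => step2 k
      _ = ∑ k ∈ Finset.range (n + 1), ∑ x ∈ Finset.HasAntidiagonal.antidiagonal n,
          (qFact q k)⁻¹ * (PowerSeries.coeff x.1 (Fk k) *
            PowerSeries.coeff x.2 (qDeriv q F)) := by
          refine Finset.sum_congr rfl fun k _ => ?_
          rw [PowerSeries.coeff_mul, Finset.mul_sum]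
      _ = ∑ x ∈ Finset.HasAntidiagonal.antidiagonal n, ∑ k ∈ Finset.range (n + 1),
          (qFact q k)⁻¹ * (PowerSeries.coeff x.1 (Fk k) *
            PowerSeries.coeff x.2 (qDeriv q F)) := Finset.sum_comm
      _ = ∑ x ∈ Finset.HasAntidiagonal.antidiagonal n, S x.1 * ((-1 : K) ^ x.2 * p (x.2 + 1)) := by
          refine Finset.sum_congr rfl fun x hx => ?_
          have hx1 : x.1 + x.2 = n := Finset.HasAntidiagonal.mem_antidiagonal.mp hx
          rw [← hSstab x.1 (n + 1) (by omega), Finset.sum_mul]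
          refine Finset.sum_congr rfl fun k _ => ?_
          rw [hDF]; ring
  -- main strong induction
  intro n
  induction n using Nat.strong_induction_on with
  | _ n ih =>
    match n with
    | 0 =>
      simp [hFk0, hqF0, he0]
    | Nat.succ m =>
      have hE : qInt q (m + 1) * e (m + 1) =
          ∑ x ∈ Finset.HasAntidiagonal.antidiagonal m, e x.1 * ((-1 : K) ^ x.2 * p (x.2 + 1)) := by
        have := congrArg (PowerSeries.coeff m) hdefp
        rw [hcoeffD, PowerSeries.coeff_mul] at this
        simpa [PowerSeries.coeff_mk] using this
      have hE' : qInt q (m + 1) * e (m + 1) = qInt q (m + 1) * S (m + 1) := by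
        rw [hE, hODE]
        refine Finset.sum_congr rfl fun x hx => ?_
        have hx1 : x.1 + x.2 = m := Finset.HasAntidiagonal.mem_antidiagonal.mp hx
        rw [ih x.1 (by omega)]
      exact mul_left_cancel₀ (hq (m + 1) (by omega)) hE'
end

section
/- For formal power series F (with F(0)=0) and G, the starred q-composition satisfies D_q(G[F]*_q)(t) = ((D_q G)[q^{-1}F]*_q)(qt) · D_q F(t). -/
/-- Proposition 6.4: for the starred q-composition `G[F]*_q = ∑_k g_k F^{[k]*}/[k]!`
(`Cs = G[F]*_q` and `Ds = (D_q G)[q⁻¹F]*_q`, described coefficientwise, where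
`Fk` are the starred q-powers of `F` and `Fk'` those of `q⁻¹F`),
one has `D_q(G[F]*_q)(t) = ((D_q G)[q⁻¹F]*_q)(qt) ⬝ D_q F(t)`. -/
theorem stmt15 {K : Type*} [Field K] (q : K) (hq0 : q ≠ 0)
    (hq : ∀ m : ℕ, 1 ≤ m → qInt q m ≠ 0)
    (F : PowerSeries K) (hF0 : PowerSeries.constantCoeff F = 0)
    (Fk : ℕ → PowerSeries K) (hFk0 : Fk 0 = 1)
    (hFkc : ∀ k, 0 < k → PowerSeries.constantCoeff (Fk k) = 0)
    (hFkrec : ∀ k, 0 < k → qDeriv q (Fk k) =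
      PowerSeries.C (qInt q k * (q ^ (k - 1))⁻¹) *
        PowerSeries.rescale q (Fk (k - 1)) * qDeriv q F)
    (Fk' : ℕ → PowerSeries K) (hFk'0 : Fk' 0 = 1)
    (hFk'c : ∀ k, 0 < k → PowerSeries.constantCoeff (Fk' k) = 0)
    (hFk'rec : ∀ k, 0 < k → qDeriv q (Fk' k) =
      PowerSeries.C (qInt q k * (q ^ (k - 1))⁻¹) *
        PowerSeries.rescale q (Fk' (k - 1)) *
          qDeriv q (PowerSeries.C q⁻¹ * F))
    (g : ℕ → K) (Cs Ds : PowerSeries K)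
    (hC : ∀ n, PowerSeries.coeff n Cs =
      ∑ k ∈ Finset.range (n + 1), g k / qFact q k * PowerSeries.coeff n (Fk k))
    (hD : ∀ n, PowerSeries.coeff n Ds =
      ∑ k ∈ Finset.range (n + 1), g (k + 1) / qFact q k * PowerSeries.coeff n (Fk' k)) :
    qDeriv q Cs = PowerSeries.rescale q Ds * qDeriv q F := by
  classical
  have coeffD : ∀ (X : PowerSeries K) (n : ℕ), PowerSeries.coeff n (qDeriv q X)
      = qInt q (n + 1) * PowerSeries.coeff (n + 1) X := fun X n => PowerSeries.coeff_mk n _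
  have hqne : ∀ n : ℕ, qInt q (n + 1) ≠ 0 := fun n => hq (n + 1) (by omega)
  have hfact : ∀ j : ℕ, qFact q j ≠ 0 := by
    intro j
    exact Finset.prod_ne_zero_iff.mpr fun i _ => hq (i + 1) (by omega)
  have qDeriv_C_mul : ∀ (c : K) (X : PowerSeries K),
      qDeriv q (PowerSeries.C c * X) = PowerSeries.C c * qDeriv q X := by
    intro c X
    ext n
    simp only [coeffD, PowerSeries.coeff_C_mul]
    ring
  have rescale_C : ∀ c : K, PowerSeries.rescale q (PowerSeries.C c) = PowerSeries.C c := by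
    intro c
    ext n
    rw [PowerSeries.coeff_rescale]
    rcases n with _ | n
    · simp
    · simp [PowerSeries.coeff_C]
  have inj : ∀ A B : PowerSeries K, qDeriv q A = qDeriv q B →
      PowerSeries.constantCoeff A = PowerSeries.constantCoeff B → A = B := by
    intro A B hd hc
    ext n
    rcases n with _ | n
    · simpa [PowerSeries.coeff_zero_eq_constantCoeff] using hc
    · have h := congrArg (PowerSeries.coeff n) hd
      rw [coeffD, coeffD] at h
      exact mul_left_cancel₀ (hqne n) h
  have hvan : ∀ n k : ℕ, n < k → PowerSeries.coeff n (Fk k) = 0 := by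
    intro n
    induction n using Nat.strong_induction_on with
    | _ n ih =>
      intro k hk
      rcases n with _ | n
      · simpa [PowerSeries.coeff_zero_eq_constantCoeff] using hFkc k hk
      · have h := congrArg (PowerSeries.coeff n) (hFkrec k (by omega))
        rw [coeffD] at h
        have hz : PowerSeries.coeff n (PowerSeries.C (qInt q k * (q ^ (k - 1))⁻¹) *
            PowerSeries.rescale q (Fk (k - 1)) * qDeriv q F) = 0 := by
          rw [PowerSeries.coeff_mul]
          apply Finset.sum_eq_zero
          intro p hp
          have hp1 : p.1 ≤ n := by
            have := Finset.HasAntidiagonal.mem_antidiagonal.mp hp; omega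
          rw [PowerSeries.coeff_C_mul, PowerSeries.coeff_rescale,
            ih p.1 (by omega) (k - 1) (by omega)]
          ring
        rw [hz] at h
        exact mul_left_cancel₀ (hqne n) (by rw [h, mul_zero])
  have hFk'eq : ∀ k : ℕ, Fk' k = PowerSeries.C ((q ^ k)⁻¹) * Fk k := by
    intro k
    induction k with
    | zero => simp [hFk'0, hFk0]
    | succ k ih =>
      apply inj
      · rw [hFk'rec (k + 1) (by omega)]
        simp only [Nat.add_sub_cancel]
        rw [ih]
        simp only [qDeriv_C_mul]
        rw [hFkrec (k + 1) (by omega)]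
        simp only [Nat.add_sub_cancel]
        rw [map_mul (PowerSeries.rescale q), rescale_C]
        have hc : PowerSeries.C ((q ^ k)⁻¹) * PowerSeries.C q⁻¹
            = PowerSeries.C ((q ^ (k + 1))⁻¹) := by
          rw [← map_mul]
          congr 1
          rw [pow_succ, mul_inv]
        linear_combination (PowerSeries.rescale q (Fk k) * qDeriv q F *
          PowerSeries.C (qInt q (k + 1) * (q ^ k)⁻¹)) * hc
      · rw [map_mul, hFkc (k + 1) (by omega), hFk'c (k + 1) (by omega), mul_zero]
  have hkey : ∀ j n : ℕ, qInt q (n + 1) * PowerSeries.coeff (n + 1) (Fk (j + 1)) =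
      qInt q (j + 1) * (q ^ j)⁻¹ *
        PowerSeries.coeff n (PowerSeries.rescale q (Fk j) * qDeriv q F) := by
    intro j n
    have h := congrArg (PowerSeries.coeff n) (hFkrec (j + 1) (by omega))
    rw [coeffD] at h
    rw [h]
    simp only [Nat.add_sub_cancel]
    rw [mul_assoc, PowerSeries.coeff_C_mul]
  ext1 n
  rw [coeffD, hC (n + 1), Finset.mul_sum, Finset.sum_range_succ']
  have h0 : qInt q (n + 1) * (g 0 / qFact q 0 * PowerSeries.coeff (n + 1) (Fk 0)) = 0 := by
    rw [hFk0]
    simp [PowerSeries.coeff_one]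
  rw [h0, add_zero]
  have hS : ∀ j ∈ Finset.range (n + 1),
      qInt q (n + 1) * (g (j + 1) / qFact q (j + 1) * PowerSeries.coeff (n + 1) (Fk (j + 1)))
      = g (j + 1) / qFact q j * (q ^ j)⁻¹ *
        PowerSeries.coeff n (PowerSeries.rescale q (Fk j) * qDeriv q F) := by
    intro j _
    have h1 : qInt q (n + 1) * (g (j + 1) / qFact q (j + 1) *
        PowerSeries.coeff (n + 1) (Fk (j + 1)))
        = g (j + 1) / qFact q (j + 1) *
          (qInt q (n + 1) * PowerSeries.coeff (n + 1) (Fk (j + 1))) := by ring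
    rw [h1, hkey j n]
    have hfs : qFact q (j + 1) = qFact q j * qInt q (j + 1) := Finset.prod_range_succ _ _
    rw [hfs]
    have := hfact j
    have := hqne j
    field_simp
  rw [Finset.sum_congr rfl hS]
  rw [PowerSeries.coeff_mul]
  have hT : ∀ p ∈ Finset.HasAntidiagonal.antidiagonal n,
      PowerSeries.coeff p.1 (PowerSeries.rescale q Ds) *
        PowerSeries.coeff p.2 (qDeriv q F)
      = ∑ j ∈ Finset.range (n + 1), q ^ p.1 * (g (j + 1) / qFact q j *
          PowerSeries.coeff p.1 (Fk' j)) * PowerSeries.coeff p.2 (qDeriv q F) := by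
    intro p hp
    have hp1 : p.1 ≤ n := by have := Finset.HasAntidiagonal.mem_antidiagonal.mp hp; omega
    rw [PowerSeries.coeff_rescale, hD p.1]
    have hext : ∑ k ∈ Finset.range (p.1 + 1),
        g (k + 1) / qFact q k * PowerSeries.coeff p.1 (Fk' k)
        = ∑ k ∈ Finset.range (n + 1),
        g (k + 1) / qFact q k * PowerSeries.coeff p.1 (Fk' k) := by
      apply Finset.sum_subset (Finset.range_subset_range.mpr (by omega))
      intro k _ hk
      have hk1 : p.1 < k := by simp only [Finset.mem_range, not_lt] at hk; omega
      rw [hFk'eq k, PowerSeries.coeff_C_mul, hvan p.1 k hk1, mul_zero, mul_zero]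
    rw [hext, Finset.mul_sum, Finset.sum_mul]
  rw [Finset.sum_congr rfl hT, Finset.sum_comm]
  apply Finset.sum_congr rfl
  intro j _
  rw [PowerSeries.coeff_mul, Finset.mul_sum]
  apply Finset.sum_congr rfl
  intro p _
  rw [hFk'eq j, PowerSeries.coeff_C_mul, PowerSeries.coeff_rescale]
  ring
end

section
/- Let F be a formal power series over a commutative algebra over the Laurent series field Q((q)), with F(0)=0. Then for every k ≥ 0, the starred q-power equals the Gessel power at inverted parameter: F^{[k]*}_q = F^{[k]}_{q^{-1}}. Consequently, for any formal power series G, G[F]*_q = G[F]_{q^{-1}}, and in particular E_q[F]*_q = e_{q^{-1}}[F]_{q^{-1}}. -/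
lemma qInt_mul_pow {K : Type*} [Field K] {q : K} (hq0 : q ≠ 0) (m : ℕ) :
    q ^ m * qInt q⁻¹ (m + 1) = qInt q (m + 1) := by
  unfold qInt
  rw [Finset.mul_sum, ← Finset.sum_range_reflect (fun i => q ^ i) (m + 1)]
  refine Finset.sum_congr rfl fun i hi => ?_
  rw [Finset.mem_range, Nat.lt_succ_iff] at hi
  simp only [Nat.add_sub_cancel]
  rw [inv_pow, ← pow_sub₀ q hq0 hi]

lemma qInt_inv_succ {K : Type*} [Field K] {q : K} (hq0 : q ≠ 0) (m : ℕ) :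
    qInt q⁻¹ (m + 1) = (q ^ m)⁻¹ * qInt q (m + 1) := by
  rw [← qInt_mul_pow hq0 m, inv_mul_cancel_left₀ (pow_ne_zero m hq0)]

/-- Theorem 7.1: let `Fk` be the Gessel powers of `F` at parameter `q⁻¹` and `Fks`
the starred q-powers of `F` at parameter `q`.  Then (i) `F^{[k]*}_q = F^{[k]}_{q⁻¹}`
for all `k`; (ii) for any `G`, `G[F]*_q = G[F]_{q⁻¹}` — coefficientwise both
compositions have coefficient `∑_k (coeff k G) ⬝ coeff n F^{[k]}` since
`g_k/[k]! = coeff k G` in either basis; (iii) `E_q[F]*_q = e_{q⁻¹}[F]_{q⁻¹}`,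
since `q^{C(k,2)}/[k]_q! = 1/[k]_{q⁻¹}!`. -/
theorem stmt18 {K : Type*} [Field K] (q : K) (hq0 : q ≠ 0)
    (hq : ∀ m : ℕ, 1 ≤ m → qInt q m ≠ 0)
    (F : PowerSeries K) (hF0 : PowerSeries.constantCoeff F = 0)
    (Fk : ℕ → PowerSeries K) (hFk0 : Fk 0 = 1)
    (hFkc : ∀ k, 0 < k → PowerSeries.constantCoeff (Fk k) = 0)
    (hFkrec : ∀ k, 0 < k → qDeriv q⁻¹ (Fk k) =
      PowerSeries.C (qInt q⁻¹ k) * Fk (k - 1) * qDeriv q⁻¹ F)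
    (Fks : ℕ → PowerSeries K) (hFks0 : Fks 0 = 1)
    (hFksc : ∀ k, 0 < k → PowerSeries.constantCoeff (Fks k) = 0)
    (hFksrec : ∀ k, 0 < k → qDeriv q (Fks k) =
      PowerSeries.C (qInt q k * (q ^ (k - 1))⁻¹) *
        PowerSeries.rescale q (Fks (k - 1)) * qDeriv q F) :
    (∀ k, Fks k = Fk k) ∧
    (∀ (G : PowerSeries K) (n : ℕ),
      ∑ k ∈ Finset.range (n + 1), PowerSeries.coeff k G * PowerSeries.coeff n (Fks k)
        = ∑ k ∈ Finset.range (n + 1),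
            PowerSeries.coeff k G * PowerSeries.coeff n (Fk k)) ∧
    (∀ n : ℕ,
      ∑ k ∈ Finset.range (n + 1),
          q ^ Nat.choose k 2 / qFact q k * PowerSeries.coeff n (Fks k)
        = ∑ k ∈ Finset.range (n + 1),
            (qFact q⁻¹ k)⁻¹ * PowerSeries.coeff n (Fk k)) := by
  have hqv : ∀ m : ℕ, qInt q (m + 1) ≠ 0 := fun m => hq (m + 1) (by omega)
  have hqiv : ∀ m : ℕ, qInt q⁻¹ (m + 1) ≠ 0 := fun m => by
    rw [qInt_inv_succ hq0 m]
    exact mul_ne_zero (inv_ne_zero (pow_ne_zero m hq0)) (hqv m)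
  have h1 : ∀ k, Fks k = Fk k := by
    intro k
    induction k with
    | zero => rw [hFks0, hFk0]
    | succ k ih =>
      ext n
      cases n with
      | zero =>
        simp only [PowerSeries.coeff_zero_eq_constantCoeff]
        rw [hFksc _ k.succ_pos, hFkc _ k.succ_pos]
      | succ n =>
        have hs := congrArg (PowerSeries.coeff n) (hFksrec (k + 1) k.succ_pos)
        have hk := congrArg (PowerSeries.coeff n) (hFkrec (k + 1) k.succ_pos)
        simp only [Nat.add_sub_cancel] at hs hk
        rw [ih] at hs
        simp only [mul_assoc, PowerSeries.coeff_C_mul] at hs hk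
        simp only [PowerSeries.coeff_mul, PowerSeries.coeff_rescale, qDeriv,
          PowerSeries.coeff_mk] at hs hk
        have key : qInt q⁻¹ (n + 1) * (qInt q (n + 1) *
              PowerSeries.coeff (n + 1) (Fks (k + 1)))
            = qInt q (n + 1) * (qInt q⁻¹ (n + 1) *
              PowerSeries.coeff (n + 1) (Fk (k + 1))) := by
          rw [hs, hk]
          simp only [qInt_inv_succ hq0, Finset.mul_sum]
          refine Finset.sum_congr rfl fun p hp => ?_
          obtain ⟨a, b⟩ := p
          rw [Finset.HasAntidiagonal.mem_antidiagonal] at hp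
          simp only at hp ⊢
          subst hp
          rw [pow_add]
          field_simp
        rw [← mul_assoc, ← mul_assoc, mul_comm (qInt q⁻¹ (n + 1)) (qInt q (n + 1))] at key
        exact mul_left_cancel₀ (mul_ne_zero (hqv n) (hqiv n)) key
  refine ⟨h1, fun G n => Finset.sum_congr rfl fun k _ => by rw [h1], fun n => ?_⟩
  have hfact : ∀ k, qFact q⁻¹ k = (q ^ k.choose 2)⁻¹ * qFact q k := by
    intro k
    induction k with
    | zero => simp [qFact]
    | succ k ih =>
      have e1 : qFact q⁻¹ (k + 1) = qFact q⁻¹ k * qInt q⁻¹ (k + 1) := by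
        simp [qFact, Finset.prod_range_succ]
      have e2 : qFact q (k + 1) = qFact q k * qInt q (k + 1) := by
        simp [qFact, Finset.prod_range_succ]
      rw [e1, e2, ih, qInt_inv_succ hq0 k, Nat.choose_succ_succ,
        Nat.choose_one_right, pow_add, mul_inv]
      ring
  refine Finset.sum_congr rfl fun k _ => ?_
  rw [h1, hfact, mul_inv, inv_inv, div_eq_mul_inv]
end
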